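/- Let (Ω, Σ, μ) be an atomless measure space, X a Banach space, and (f_i)_{i∈ℕ} a sequence in the unit sphere of L_∞(μ; X). Then there exists a sequence (E_i)_{i∈ℕ} of pairwise disjoint measurable sets of positive measure such that f_i·χ_{E_i} has essential supremum norm 1 for each i, i.e., ess sup_{t ∈ E_i} ‖f_i(t)‖ = 1. -/

import Mathlib

open MeasureTheory ENNReal

lemma disjointify {Ω : Type*} [MeasurableSpace Ω] (μ : Measure Ω)
    (hatomless : ∀ A : Set Ω, MeasurableSet A →
      ∀ c : ℝ≥0∞, 0 < c → c < μ A →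
        ∃ B ⊆ A, MeasurableSet B ∧ μ B = c)
    (A : ℕ → Set Ω) (hA : ∀ m, MeasurableSet (A m)) (hpos : ∀ m, 0 < μ (A m)) :
    ∃ B : ℕ → Set Ω, (∀ k, MeasurableSet (B k)) ∧ (∀ k, B k ⊆ A k) ∧
      (∀ k, 0 < μ (B k)) ∧ Pairwise (Function.onFun Disjoint B) := by
  classical
  have hgeo : ∀ ε : ℝ≥0∞, ∑' j : ℕ, ε / 2 * 2⁻¹ ^ (j + 1) = ε / 2 := by
    intro ε
    rw [ENNReal.tsum_mul_left, ENNReal.tsum_geometric_add_one, ENNReal.one_sub_inv_two,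
      inv_inv, ENNReal.inv_mul_cancel (by norm_num) ENNReal.ofNat_ne_top, mul_one]
  have hstep : ∀ U : Set Ω, MeasurableSet U → (∀ m, 0 < μ (A m \ U)) → ∀ k : ℕ,
      ∃ B : Set Ω, MeasurableSet B ∧ B ⊆ A k \ U ∧ 0 < μ B ∧
        ∀ m, 0 < μ (A m \ (U ∪ B)) := by
    intro U hU hd k
    set ε : ℝ≥0∞ := min (μ (A k \ U)) 1 with hεdef
    have hε0 : ε ≠ 0 := (lt_min (hd k) zero_lt_one).ne'
    have hε1 : ε ≤ 1 := min_le_right _ _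
    have hεtop : ε ≠ ⊤ := (hε1.trans_lt ENNReal.one_lt_top).ne
    have hεC : ε ≤ μ (A k \ U) := min_le_left _ _
    set c : ℕ → ℝ≥0∞ := fun j => min (ε / 2 * 2⁻¹ ^ (j + 1)) (μ (A j \ U) / 2) with hcdef
    have hcpos : ∀ j, 0 < c j := by
      intro j
      apply lt_min
      · refine ENNReal.mul_pos (ENNReal.div_ne_zero.2 ⟨hε0, ENNReal.ofNat_ne_top⟩) ?_
        exact (ENNReal.pow_pos (ENNReal.inv_pos.2 ENNReal.ofNat_ne_top) _).ne'
      · exact ENNReal.half_pos (hd j).ne'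
    have hclt : ∀ j, c j < μ (A j \ U) := by
      intro j
      rcases eq_or_ne (μ (A j \ U)) ⊤ with h | h
      · refine lt_of_le_of_lt (min_le_left _ _) ?_
        rw [h]
        refine lt_of_le_of_lt ?_ (lt_of_le_of_lt hε1 ENNReal.one_lt_top)
        exact (mul_le_of_le_one_right' (pow_le_one' (by simp [ENNReal.inv_le_one]) _)).trans
          ENNReal.half_le_self
      · exact lt_of_le_of_lt (min_le_right _ _) (ENNReal.half_lt_self (hd j).ne' h)
    have hch : ∀ j : ℕ, ∃ B ⊆ A j \ U, MeasurableSet B ∧ μ B = c j :=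
      fun j => hatomless _ ((hA j).diff hU) _ (hcpos j) (hclt j)
    choose A' hA'sub hA'spec using hch
    have hA'meas : ∀ j, MeasurableSet (A' j) := fun j => (hA'spec j).1
    have hA'μ : ∀ j, μ (A' j) = c j := fun j => (hA'spec j).2
    refine ⟨(A k \ U) \ ⋃ j, A' j, (((hA k).diff hU).diff (MeasurableSet.iUnion hA'meas)),
      Set.diff_subset, ?_, ?_⟩
    · by_contra hB0
      push_neg at hB0
      have hB0' : μ ((A k \ U) \ ⋃ j, A' j) = 0 := le_antisymm hB0 zero_le
      have h1 : μ (A k \ U) ≤ μ ((A k \ U) \ ⋃ j, A' j) + μ (⋃ j, A' j) := by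
        refine le_trans (measure_mono ?_) (measure_union_le _ _)
        intro t ht
        by_cases h : t ∈ ⋃ j, A' j
        · exact Or.inr h
        · exact Or.inl ⟨ht, h⟩
      have h2 : μ (⋃ j, A' j) ≤ ε / 2 := by
        refine le_trans (measure_iUnion_le _) ?_
        calc ∑' j, μ (A' j) ≤ ∑' j : ℕ, ε / 2 * 2⁻¹ ^ (j + 1) := by
              refine ENNReal.tsum_le_tsum fun j => ?_
              rw [hA'μ j]; exact min_le_left _ _
          _ = ε / 2 := hgeo ε
      rw [hB0', zero_add] at h1
      have : ε ≤ ε / 2 := hεC.trans (h1.trans h2)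
      exact absurd (this.trans_lt (ENNReal.half_lt_self hε0 hεtop)) (lt_irrefl _)
    · intro m
      have hsub : A' m ⊆ A m \ (U ∪ (A k \ U) \ ⋃ j, A' j) := by
        intro t ht
        have h1 : t ∈ A m \ U := hA'sub m ht
        refine ⟨h1.1, ?_⟩
        rintro (h | h)
        · exact h1.2 h
        · exact h.2 (Set.mem_iUnion.2 ⟨m, ht⟩)
      refine lt_of_lt_of_le ?_ (measure_mono hsub)
      rw [hA'μ m]; exact hcpos m
  -- recursive construction
  let pick : Set Ω → ℕ → Set Ω := fun U k =>
    if h : MeasurableSet U ∧ ∀ m, 0 < μ (A m \ U) then (hstep U h.1 h.2 k).choose else ∅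
  let U : ℕ → Set Ω := fun n => Nat.rec (∅ : Set Ω) (fun k Uk => Uk ∪ pick Uk k) n
  have hUsucc : ∀ k, U (k + 1) = U k ∪ pick (U k) k := fun k => rfl
  have hInv : ∀ n, MeasurableSet (U n) ∧ ∀ m, 0 < μ (A m \ U n) := by
    intro n
    induction n with
    | zero =>
      refine ⟨MeasurableSet.empty, fun m => ?_⟩
      have h0 : U 0 = ∅ := rfl
      rw [h0, Set.diff_empty]
      exact hpos m
    | succ k ih =>
      have hpick : pick (U k) k = (hstep (U k) ih.1 ih.2 k).choose := by
        simp only [pick, dif_pos (And.intro ih.1 ih.2)]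
      obtain ⟨hm, hsub, hp, hall⟩ := (hstep (U k) ih.1 ih.2 k).choose_spec
      rw [hUsucc, hpick]
      exact ⟨ih.1.union hm, hall⟩
  have hBspec : ∀ k, MeasurableSet (pick (U k) k) ∧ pick (U k) k ⊆ A k \ U k ∧
      0 < μ (pick (U k) k) := by
    intro k
    have hpick : pick (U k) k = (hstep (U k) (hInv k).1 (hInv k).2 k).choose := by
      simp only [pick, dif_pos (And.intro (hInv k).1 (hInv k).2)]
    obtain ⟨hm, hsub, hp, _⟩ := (hstep (U k) (hInv k).1 (hInv k).2 k).choose_spec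
    rw [hpick]
    exact ⟨hm, hsub, hp⟩
  have hUmono : Monotone U := by
    refine monotone_nat_of_le_succ fun k => ?_
    rw [hUsucc]; exact Set.subset_union_left
  have hdisj : ∀ j k : ℕ, j < k → Disjoint (pick (U j) j) (pick (U k) k) := by
    intro j k hjk
    have h1 : pick (U j) j ⊆ U k := by
      refine le_trans ?_ (hUmono hjk)
      rw [hUsucc]; exact Set.subset_union_right
    have h2 : pick (U k) k ⊆ (U k)ᶜ := fun t ht => ((hBspec k).2.1 ht).2
    exact Set.disjoint_left.2 fun t htj htk => h2 htk (h1 htj)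
  refine ⟨fun k => pick (U k) k, fun k => (hBspec k).1,
    fun k => ((hBspec k).2.1).trans Set.diff_subset, fun k => (hBspec k).2.2, ?_⟩
  intro j k hjk
  rcases lt_or_gt_of_ne hjk with h | h
  · exact hdisj j k h
  · exact (hdisj k j h).symm

theorem stmt_12 {Ω : Type*} [MeasurableSpace Ω] (μ : Measure Ω)
    (hatomless : ∀ A : Set Ω, MeasurableSet A →
      ∀ c : ℝ≥0∞, 0 < c → c < μ A →
        ∃ B ⊆ A, MeasurableSet B ∧ μ B = c)
    {X : Type*} [NormedAddCommGroup X] [CompleteSpace X]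
    (f : ℕ → Lp X ⊤ μ) (hf : ∀ i, ‖f i‖ = 1) :
    ∃ E : ℕ → Set Ω, (∀ i, MeasurableSet (E i)) ∧
      (∀ i, 0 < μ (E i)) ∧ Pairwise (Function.onFun Disjoint E) ∧
      ∀ i, eLpNorm (f i) ⊤ (μ.restrict (E i)) = 1 := by
  classical
  have hnorm : ∀ i, eLpNorm (f i) ⊤ μ = 1 := by
    intro i
    have h1 := Lp.norm_def (f i)
    rw [hf i] at h1
    have h2 := Lp.eLpNorm_ne_top (f i)
    exact (ENNReal.toReal_eq_one_iff _).1 h1.symm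
  have hmeas : ∀ i, Measurable fun t => ‖(f i : Ω → X) t‖ :=
    fun i => (Lp.stronglyMeasurable (f i)).norm.measurable
  set A : ℕ → Set Ω :=
    fun k => {t | 1 - 1 / (k.unpair.2 + 1 : ℝ) < ‖(f k.unpair.1 : Ω → X) t‖} with hAdef
  have hAm : ∀ k, MeasurableSet (A k) :=
    fun k => measurableSet_lt measurable_const (hmeas _)
  have hc1 : ∀ n : ℕ, (1 - 1 / (n + 1 : ℝ)) < 1 := by
    intro n
    have : (0:ℝ) < 1 / (n + 1 : ℝ) := by positivity
    linarith
  have hApos : ∀ k, 0 < μ (A k) := by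
    intro k
    by_contra h0
    push_neg at h0
    have h0' : μ (A k) = 0 := le_antisymm h0 zero_le
    have hae : ∀ᵐ t ∂μ, ‖(f k.unpair.1 : Ω → X) t‖ ≤ 1 - 1 / (k.unpair.2 + 1 : ℝ) := by
      rw [ae_iff]
      convert h0' using 2
      ext t
      simp [hAdef, not_le]
    have hb := eLpNormEssSup_le_of_ae_bound (μ := μ) hae
    rw [← eLpNorm_exponent_top, hnorm] at hb
    have : ENNReal.ofReal (1 - 1 / (k.unpair.2 + 1 : ℝ)) < 1 :=
      ENNReal.ofReal_lt_one.2 (hc1 _)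
    exact absurd (hb.trans_lt this) (lt_irrefl _)
  obtain ⟨B, hBm, hBsub, hBpos, hBdisj⟩ := disjointify μ hatomless A hAm hApos
  refine ⟨fun i => ⋃ n, B (Nat.pair i n), fun i => MeasurableSet.iUnion fun n => hBm _,
    fun i => lt_of_lt_of_le (hBpos (Nat.pair i 0)) (measure_mono (Set.subset_iUnion (fun n => B (Nat.pair i n)) 0)),
    ?_, ?_⟩
  · intro i i' hii'
    refine Set.disjoint_iUnion_left.2 fun n => Set.disjoint_iUnion_right.2 fun n' => ?_
    refine hBdisj ?_
    intro h
    apply hii'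
    have := congrArg (fun k => (Nat.unpair k).1) h
    simpa using this
  · intro i
    set E : Set Ω := ⋃ n, B (Nat.pair i n) with hEdef
    refine le_antisymm ?_ ?_
    · rw [← hnorm i]
      exact eLpNorm_mono_measure _ Measure.restrict_le_self
    · refine ENNReal.le_of_forall_nnreal_lt fun r hr => ?_
      have hr1 : (r : ℝ) < 1 := by exact_mod_cast hr
      obtain ⟨n, hn⟩ := exists_nat_one_div_lt (show (0:ℝ) < 1 - r by linarith)
      have hrc : (r : ℝ) < 1 - 1 / (n + 1 : ℝ) := by linarith
      set ν := μ.restrict E with hνdef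
      set S : Set Ω := B (Nat.pair i n) with hSdef
      have hSsub : S ⊆ A (Nat.pair i n) := hBsub _
      have hSν : 0 < ν S := by
        rw [hνdef, Measure.restrict_apply (hBm _)]
        have : S ∩ E = S := Set.inter_eq_self_of_subset_left (Set.subset_iUnion (fun n => B (Nat.pair i n)) n)
        rw [this]
        exact hBpos _
      rw [eLpNorm_exponent_top]
      by_contra hcon
      push_neg at hcon
      have hae : ∀ᵐ t ∂ν, (‖(f i : Ω → X) t‖₊ : ℝ≥0∞) ≤ eLpNormEssSup (f i : Ω → X) ν :=
        ae_le_essSup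
      have hnull : ν {t | ¬ (‖(f i : Ω → X) t‖₊ : ℝ≥0∞) ≤ eLpNormEssSup (f i : Ω → X) ν} = 0 := by
        rw [← ae_iff] at *
        exact hae
      refine absurd (measure_mono_null ?_ hnull) hSν.ne'
      intro t ht
      have h1 : 1 - 1 / (n + 1 : ℝ) < ‖(f i : Ω → X) t‖ := by
        have := hSsub ht
        simp only [hAdef, Set.mem_setOf_eq, Nat.unpair_pair] at this
        exact this
      have h2 : (r : ℝ≥0∞) < (‖(f i : Ω → X) t‖₊ : ℝ≥0∞) := by
        rw [ENNReal.coe_lt_coe, ← NNReal.coe_lt_coe]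
        calc (r : ℝ) < 1 - 1 / (n + 1 : ℝ) := hrc
          _ < ‖(f i : Ω → X) t‖ := h1
          _ = ‖(f i : Ω → X) t‖₊ := (coe_nnnorm _).symm
      simp only [Set.mem_setOf_eq, not_le]
      exact hcon.trans h2
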